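/- Let f₁, f₂, g₁, g₂: ℝ → ℂ be measurable with |f₁|, |f₂| ≤ 1 (characteristic-function-type bounds not required), g₂ ≠ 0. Define ψ(t) := (1/|g₂(t)|) min(1, r/|g₂(t)|) for r > 0. If for all t, |ĝ₂(t) − g₂(t)| ≤ C r where ĝ₂ is an approximation of g₂, and R(t) := 1{|ĝ₂(t)| > r}/ĝ₂(t) − 1/g₂(t), then |R(t)| ≤ C' ψ(t) for a constant C' depending only on C. In particular: (i) if |g₂(t)| < 2r then |g₂(t)||R(t)| ≤ 1 + r^{-1}|ĝ₂(t) − g₂(t)|; (ii) if |g₂(t)| ≥ 2r and |ĝ₂(t)| ≤ r then |ĝ₂(t) − g₂(t)| ≥ |g₂(t)|/2. -/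

import Mathlib

/-- The error of the trimmed reciprocal:
`R(t) = 1{|ĝ₂(t)| > r}/ĝ₂(t) − 1/g₂(t)`. -/
noncomputable def Rtrim (ghat g2 : ℝ → ℂ) (r : ℝ) (t : ℝ) : ℂ :=
  (if r < ‖ghat t‖ then (ghat t)⁻¹ else 0) - (g2 t)⁻¹

lemma abs_inv_sub_inv (x y : ℂ) (hx : x ≠ 0) (hy : y ≠ 0) :
    ‖x⁻¹ - y⁻¹‖ = ‖x - y‖ / (‖x‖ * ‖y‖) := by
  have h : x⁻¹ - y⁻¹ = (y - x) / (x * y) := by field_simp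
  rw [h, norm_div, norm_mul, norm_sub_rev]

lemma abs_sub_abs_le (x y : ℂ) :
    ‖x‖ - ‖y‖ ≤ ‖y - x‖ := by
  have := norm_sub_norm_le x y
  rw [norm_sub_rev] at this
  simpa using this

/-- deterministic core of Neumann's deconvolution lemma.
With `ψ(t) = |g₂(t)|⁻¹ min(1, r/|g₂(t)|)` and `|ĝ₂ − g₂| ≤ C r` everywhere,
`|R(t)| ≤ C' ψ(t)` for a constant `C'` depending only on `C`; moreover
(i) if `|g₂(t)| < 2r` then `|g₂(t)||R(t)| ≤ 1 + r⁻¹|ĝ₂(t) − g₂(t)|`, and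
(ii) if `|g₂(t)| ≥ 2r` and `|ĝ₂(t)| ≤ r` then `|ĝ₂(t) − g₂(t)| ≥ |g₂(t)|/2`. -/
theorem stmt_10 (g2 ghat : ℝ → ℂ) (r C : ℝ) (hr : 0 < r) (hC : 0 < C)
    (hg2 : ∀ t, g2 t ≠ 0)
    (happrox : ∀ t, ‖ghat t - g2 t‖ ≤ C * r) :
    (∃ C' > 0, ∀ t : ℝ,
      ‖Rtrim ghat g2 r t‖ ≤
        C' * ((‖g2 t‖)⁻¹ * min 1 (r / ‖g2 t‖))) ∧
    (∀ t : ℝ, ‖g2 t‖ < 2 * r →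
      ‖g2 t‖ * ‖Rtrim ghat g2 r t‖ ≤
        1 + r⁻¹ * ‖ghat t - g2 t‖) ∧
    (∀ t : ℝ, 2 * r ≤ ‖g2 t‖ → ‖ghat t‖ ≤ r →
      ‖g2 t‖ / 2 ≤ ‖ghat t - g2 t‖) := by
  have habs : ∀ t, 0 < ‖g2 t‖ := fun t => norm_pos_iff.mpr (hg2 t)
  have hd : ∀ t, 0 ≤ ‖ghat t - g2 t‖ := fun t => norm_nonneg _
  -- part (iii)
  have part3 : ∀ t : ℝ, 2 * r ≤ ‖g2 t‖ → ‖ghat t‖ ≤ r →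
      ‖g2 t‖ / 2 ≤ ‖ghat t - g2 t‖ := by
    intro t ha hb
    have h1 := abs_sub_abs_le (g2 t) (ghat t)
    linarith
  -- part (ii)
  have part2 : ∀ t : ℝ, ‖g2 t‖ < 2 * r →
      ‖g2 t‖ * ‖Rtrim ghat g2 r t‖ ≤
        1 + r⁻¹ * ‖ghat t - g2 t‖ := by
    intro t _
    have ha := habs t
    unfold Rtrim
    by_cases hb : r < ‖ghat t‖
    · rw [if_pos hb]
      have hgh : ghat t ≠ 0 := by
        intro h; rw [h] at hb; simp at hb; linarith
      rw [abs_inv_sub_inv _ _ hgh (hg2 t)]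
      have hbpos : 0 < ‖ghat t‖ := lt_trans hr hb
      rw [div_eq_mul_inv, mul_inv]
      have key : ‖g2 t‖ *
          (‖ghat t - g2 t‖ * ((‖ghat t‖)⁻¹ * (‖g2 t‖)⁻¹))
          = ‖ghat t - g2 t‖ * (‖ghat t‖)⁻¹ := by
        field_simp
      rw [key]
      have h1 : (‖ghat t‖)⁻¹ ≤ r⁻¹ := inv_anti₀ hr hb.le
      have := hd t
      calc ‖ghat t - g2 t‖ * (‖ghat t‖)⁻¹
          ≤ ‖ghat t - g2 t‖ * r⁻¹ := by
            apply mul_le_mul_of_nonneg_left h1 this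
        _ ≤ 1 + r⁻¹ * ‖ghat t - g2 t‖ := by
            have : 0 ≤ r⁻¹ := le_of_lt (inv_pos.mpr hr)
            nlinarith
    · rw [if_neg hb]
      rw [zero_sub, norm_neg, norm_inv, mul_inv_cancel₀ (ne_of_gt ha)]
      have : 0 ≤ r⁻¹ * ‖ghat t - g2 t‖ := by positivity
      linarith
  refine ⟨⟨2 * (1 + C) ^ 2, by positivity, ?_⟩, part2, part3⟩
  intro t
  have ha := habs t
  have hdt := happrox t
  have hd0 := hd t
  by_cases hcase : ‖g2 t‖ < 2 * r
  · -- small |g2|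
    have h2 := part2 t hcase
    have hRle : ‖Rtrim ghat g2 r t‖ ≤ (1 + C) / ‖g2 t‖ := by
      rw [le_div_iff₀ ha]
      have : r⁻¹ * ‖ghat t - g2 t‖ ≤ C := by
        rw [inv_mul_le_iff₀ hr]
        linarith [hdt]
      nlinarith [norm_nonneg (Rtrim ghat g2 r t)]
    have hmin : (1:ℝ)/2 ≤ min 1 (r / ‖g2 t‖) := by
      apply le_min (by norm_num)
      rw [le_div_iff₀ ha]; linarith
    have hinv : 0 < (‖g2 t‖)⁻¹ := inv_pos.mpr ha
    calc ‖Rtrim ghat g2 r t‖ ≤ (1 + C) / ‖g2 t‖ := hRle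
      _ ≤ 2 * (1 + C) ^ 2 * ((‖g2 t‖)⁻¹ * (1/2)) := by
          rw [div_eq_mul_inv]
          have h0 : 0 ≤ (1 + C) * C * (‖g2 t‖)⁻¹ := by positivity
          nlinarith
      _ ≤ 2 * (1 + C) ^ 2 * ((‖g2 t‖)⁻¹ * min 1 (r / ‖g2 t‖)) := by
          gcongr
  · -- large |g2|
    push_neg at hcase
    have hmin : min 1 (r / ‖g2 t‖) = r / ‖g2 t‖ := by
      apply min_eq_right
      rw [div_le_one ha]; linarith
    rw [hmin]
    unfold Rtrim
    by_cases hb : r < ‖ghat t‖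
    · rw [if_pos hb]
      have hgh : ghat t ≠ 0 := by
        intro h; rw [h] at hb; simp at hb; linarith
      have hbpos : 0 < ‖ghat t‖ := lt_trans hr hb
      rw [abs_inv_sub_inv _ _ hgh (hg2 t)]
      rw [div_le_iff₀ (by positivity)]
      have key : 2 * (1 + C) ^ 2 * ((‖g2 t‖)⁻¹ * (r / ‖g2 t‖)) *
          (‖ghat t‖ * ‖g2 t‖)
          = 2 * (1 + C) ^ 2 * r * ‖ghat t‖ / ‖g2 t‖ := by
        field_simp
      rw [key, le_div_iff₀ ha]
      by_cases hsmall : ‖g2 t‖ ≤ 2 * C * r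
      · have h1 : ‖ghat t - g2 t‖ * ‖g2 t‖ ≤ (C * r) * (2 * C * r) :=
          mul_le_mul hdt hsmall ha.le (by positivity)
        nlinarith [mul_le_mul_of_nonneg_left hb.le
          (by positivity : (0:ℝ) ≤ 2 * (1 + C) ^ 2 * r), mul_pos hr hr]
      · push_neg at hsmall
        have hblow : ‖g2 t‖ - ‖ghat t - g2 t‖ ≤ ‖ghat t‖ := by
          have := abs_sub_abs_le (g2 t) (ghat t)
          linarith
        have hb2 : ‖g2 t‖ / 2 ≤ ‖ghat t‖ := by linarith
        have h1 : ‖ghat t - g2 t‖ * ‖g2 t‖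
            ≤ (C * r) * ‖g2 t‖ := mul_le_mul_of_nonneg_right hdt ha.le
        have hCq : C ≤ (1 + C) ^ 2 := by nlinarith
        nlinarith [mul_le_mul_of_nonneg_left hb2
          (by positivity : (0:ℝ) ≤ 2 * (1 + C) ^ 2 * r), mul_pos hr ha,
          mul_le_mul_of_nonneg_right hCq (mul_pos hr ha).le]
    · rw [if_neg hb]
      push_neg at hb
      have h3 := part3 t hcase hb
      have hsmall : ‖g2 t‖ ≤ 2 * C * r := by linarith
      rw [zero_sub, norm_neg, norm_inv]
      have key : 2 * (1 + C) ^ 2 * ((‖g2 t‖)⁻¹ * (r / ‖g2 t‖))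
          = (2 * (1 + C) ^ 2 * r) / (‖g2 t‖ * ‖g2 t‖) := by
        field_simp
      rw [key, le_div_iff₀ (by positivity)]
      have h4 : (‖g2 t‖)⁻¹ * (‖g2 t‖ * ‖g2 t‖)
          = ‖g2 t‖ := by field_simp
      rw [h4]
      nlinarith
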